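/- Let t be a unit in a commutative ring R with (1 − t)^N = 0 for some N, and let M be an R-module. An element (x_1, …, x_a) ∈ M^a lies in the kernel of 1 − T, where T(x_1, …, x_a) = (t x_1 − t x_2, …, t x_a), if and only if x_{i+1} = (1 − t⁻¹) x_i for all i < a and (1 − t⁻¹)^a x_1 = 0. -/
import Mathlib


variable (R : Type*) [CommRing R] (M : Type*) [AddCommGroup M] [Module R M]

/-- The monodromy action `T` of `t` on `M^a ≅ M ⊗ L^a`:
`T(x_1, …, x_a) = (t x_1 - t x_2, …, t x_{a-1} - t x_a, t x_a)`. -/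
def Tmon (t : Rˣ) (a : ℕ) : (Fin a → M) →ₗ[R] (Fin a → M) where
  toFun x i := (t : R) • x i - (if h : (i : ℕ) + 1 < a then (t : R) • x ⟨i + 1, h⟩ else 0)
  map_add' x y := by
    funext i
    by_cases h : (i : ℕ) + 1 < a <;> simp [h, smul_add] <;> abel
  map_smul' c x := by
    funext i
    by_cases h : (i : ℕ) + 1 < a <;> simp [h, smul_sub, smul_comm c]

/-- The map `u : M → M^a`, `u(x) = ((1 - t⁻¹)^0 x, (1 - t⁻¹)^1 x, …, (1 - t⁻¹)^{a-1} x)`. -/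
def umon (t : Rˣ) (a : ℕ) : M →ₗ[R] (Fin a → M) where
  toFun x i := ((1 - (↑t⁻¹ : R)) ^ (i : ℕ)) • x
  map_add' x y := by funext i; simp [smul_add]
  map_smul' c x := by funext i; simp [smul_comm c]

/-- An element `(x_1, …, x_a)` of `M^a` lies in `ker(1 - T)` if and only if
`x_{i+1} = (1 - t⁻¹) x_i` for all `i < a` and `(1 - t⁻¹)^a x_1 = 0`. -/
theorem stmt10 (t : Rˣ) (hnil : ∃ N : ℕ, (1 - (t : R)) ^ N = 0)
    (a : ℕ) (ha : 0 < a) (x : Fin a → M) :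
    Tmon R M t a x = x ↔
      ((∀ (i : Fin a) (h : (i : ℕ) + 1 < a),
          x ⟨(i : ℕ) + 1, h⟩ = (1 - (↑t⁻¹ : R)) • x i) ∧
        ((1 - (↑t⁻¹ : R)) ^ a) • x ⟨0, ha⟩ = 0) := by
  have htinv : (t : R) * (↑t⁻¹ : R) = 1 := t.mul_inv
  -- auxiliary: the recursion determines everything from x 0
  have aux : ∀ (h1 : ∀ (i : Fin a) (h : (i : ℕ) + 1 < a),
      x ⟨(i : ℕ) + 1, h⟩ = (1 - (↑t⁻¹ : R)) • x i),
      ∀ i : Fin a, x i = ((1 - (↑t⁻¹ : R)) ^ (i : ℕ)) • x ⟨0, ha⟩ := by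
    intro h1 i
    obtain ⟨n, hn⟩ := i
    induction n with
    | zero => simp
    | succ n ih =>
      have hn' : n < a := Nat.lt_of_succ_lt hn
      have := h1 ⟨n, hn'⟩ hn
      rw [this, ih hn', smul_smul, pow_succ, mul_comm]
  constructor
  · intro h
    have hp : ∀ i : Fin a, (t : R) • x i -
        (if h : (i : ℕ) + 1 < a then (t : R) • x ⟨(i : ℕ) + 1, h⟩ else 0) = x i :=
      fun i => congrFun h i
    have h1 : ∀ (i : Fin a) (hi : (i : ℕ) + 1 < a),
        x ⟨(i : ℕ) + 1, hi⟩ = (1 - (↑t⁻¹ : R)) • x i := by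
      intro i hi
      have := hp i
      rw [dif_pos hi, sub_eq_iff_eq_add] at this
      have h2 : (t : R) • x ⟨(i : ℕ) + 1, hi⟩ = ((t : R) - 1) • x i := by
        rw [sub_smul, one_smul, this]; abel
      calc x ⟨(i : ℕ) + 1, hi⟩ = (↑t⁻¹ : R) • ((t : R) • x ⟨(i : ℕ) + 1, hi⟩) := by
            rw [smul_smul, mul_comm, htinv, one_smul]
        _ = (1 - (↑t⁻¹ : R)) • x i := by
            rw [h2, smul_smul, mul_sub, mul_comm, htinv, mul_one]
    refine ⟨h1, ?_⟩
    -- last coordinate condition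
    have hlast : (⟨a - 1, Nat.sub_lt ha one_pos⟩ : Fin a).val + 1 = a :=
      Nat.succ_pred_eq_of_pos ha
    have := hp ⟨a - 1, Nat.sub_lt ha one_pos⟩
    rw [dif_neg (by omega), sub_zero] at this
    have hz : ((t : R) - 1) • x ⟨a - 1, Nat.sub_lt ha one_pos⟩ = 0 := by
      rw [sub_smul, one_smul, this, sub_self]
    have hx := aux h1 ⟨a - 1, Nat.sub_lt ha one_pos⟩
    have key : (1 - (↑t⁻¹ : R)) ^ a = (↑t⁻¹ : R) * ((t : R) - 1) * (1 - (↑t⁻¹ : R)) ^ (a - 1) := by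
      have : (1 - (↑t⁻¹ : R)) = (↑t⁻¹ : R) * ((t : R) - 1) := by
        rw [mul_sub, mul_comm, htinv, mul_one]
      calc (1 - (↑t⁻¹ : R)) ^ a = (1 - (↑t⁻¹ : R)) * (1 - (↑t⁻¹ : R)) ^ (a - 1) := by
            conv_lhs => rw [← Nat.succ_pred_eq_of_pos ha, pow_succ, mul_comm]
            rw [Nat.pred_eq_sub_one]
        _ = (↑t⁻¹ : R) * ((t : R) - 1) * (1 - (↑t⁻¹ : R)) ^ (a - 1) := by rw [this]
    rw [key, mul_assoc, mul_smul, mul_smul, ← hx, hz, smul_zero]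
  · rintro ⟨h1, h2⟩
    funext i
    show (t : R) • x i - (if h : (i : ℕ) + 1 < a then (t : R) • x ⟨(i : ℕ) + 1, h⟩ else 0) = x i
    by_cases hi : (i : ℕ) + 1 < a
    · rw [dif_pos hi, h1 i hi, smul_smul]
      have h3 : (t : R) * (1 - (↑t⁻¹ : R)) = (t : R) - 1 := by
        rw [mul_sub, mul_one, htinv]
      rw [h3, sub_smul, one_smul]
      abel
    · rw [dif_neg hi, sub_zero]
      -- i is the last index; show (t-1) • x i = 0, using h2
      have hia : (i : ℕ) = a - 1 := by omega
      have hx := aux h1 i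
      have : ((t : R) - 1) • x i = 0 := by
        have key : ((t : R) - 1) * (1 - (↑t⁻¹ : R)) ^ (i : ℕ) = (t : R) * (1 - (↑t⁻¹ : R)) ^ a := by
          have h3 : (t : R) * (1 - (↑t⁻¹ : R)) = (t : R) - 1 := by
            rw [mul_sub, mul_one, htinv]
          calc ((t : R) - 1) * (1 - (↑t⁻¹ : R)) ^ (i : ℕ)
              = (t : R) * ((1 - (↑t⁻¹ : R)) * (1 - (↑t⁻¹ : R)) ^ (i : ℕ)) := by
                rw [← mul_assoc, h3]
            _ = (t : R) * (1 - (↑t⁻¹ : R)) ^ a := by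
                rw [← pow_succ']
                congr 2
                omega
        rw [hx, smul_smul, key, mul_smul, h2, smul_zero]
      have := congrArg (fun y => y + x i) this
      simpa [sub_smul, one_smul, sub_add_cancel] using this
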